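/- arXiv:2405.05187 — 7 statements merged into one kernel-verified Lean document; each statement's English description precedes it below -/
import Mathlib

section
/- Let d, N ≥ 1, let A : ℝ^d → Matrix (Fin d) (Fin d) ℝ satisfy, for every z ≠ 0: A(z) is symmetric, A(−z) = A(z), and A(z)·z = 0, and set A(0) = 0. Let s : ℝ × ℝ^d → ℝ^d be any map, and suppose v₁, …, v_N : ℝ → ℝ^d are differentiable and satisfy for every i and every t the particle ODE vᵢ'(t) = −(1/N) ∑_{j=1}^N A(vᵢ(t) − v_j(t)) (s(t, vᵢ(t)) − s(t, v_j(t))). Then the total momentum t ↦ (1/N) ∑_{i=1}^N vᵢ(t) and the kinetic energy t ↦ (1/N) ∑_{i=1}^N |vᵢ(t)|² are constant in t. -/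
open scoped Matrix

private lemma aux_self_add_self_zero {M : Type*} [AddCommGroup M] [Module ℝ M] {x : M}
    (h : x + x = 0) : x = 0 := by
  have h2 : (2 : ℝ) • x = 0 := by rw [two_smul]; exact h
  simpa using (smul_eq_zero.mp h2).resolve_left two_ne_zero


/-- Conservation of momentum and kinetic energy for the score-based
particle ODE system of the homogeneous Landau equation.  The collision kernel
`A` is symmetric, even and annihilates its argument (for `z ≠ 0`, with `A 0 = 0`),
`s` is an arbitrary (time-dependent) score field, and the particle velocities
`v i` solve `vᵢ' = -(1/N) ∑ⱼ A(vᵢ - vⱼ) (s(t,vᵢ) - s(t,vⱼ))`. -/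
theorem stmt0 (d N : ℕ) (hd : 1 ≤ d) (hN : 1 ≤ N)
    (A : (Fin d → ℝ) → Matrix (Fin d) (Fin d) ℝ)
    (hA_symm : ∀ z : Fin d → ℝ, z ≠ 0 → (A z).IsSymm)
    (hA_even : ∀ z : Fin d → ℝ, z ≠ 0 → A (-z) = A z)
    (hA_proj : ∀ z : Fin d → ℝ, z ≠ 0 → (A z).mulVec z = 0)
    (hA_zero : A 0 = 0)
    (s : ℝ × (Fin d → ℝ) → Fin d → ℝ)
    (v : Fin N → ℝ → Fin d → ℝ)
    (hode : ∀ (i : Fin N) (t : ℝ), HasDerivAt (v i)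
      ((-((1 : ℝ) / (N : ℝ))) •
        ∑ j : Fin N, (A (v i t - v j t)).mulVec (s (t, v i t) - s (t, v j t))) t) :
    (∀ t t' : ℝ, ((1 : ℝ) / (N : ℝ)) • ∑ i : Fin N, v i t
        = ((1 : ℝ) / (N : ℝ)) • ∑ i : Fin N, v i t') ∧
    (∀ t t' : ℝ, ((1 : ℝ) / (N : ℝ)) * ∑ i : Fin N, ∑ k : Fin d, v i t k ^ 2
        = ((1 : ℝ) / (N : ℝ)) * ∑ i : Fin N, ∑ k : Fin d, v i t' k ^ 2) := by
  -- pointwise antisymmetry for momentum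
  have key1 : ∀ (a b sa sb : Fin d → ℝ),
      (A (a - b)).mulVec (sa - sb) + (A (b - a)).mulVec (sb - sa) = 0 := by
    intro a b sa sb
    by_cases h : a - b = 0
    · have hb : b - a = 0 := by rw [← neg_sub, h, neg_zero]
      rw [h, hb, hA_zero]
      simp
    · have h' : b - a = -(a - b) := by abel
      have hs : sb - sa = -(sa - sb) := by abel
      rw [h', hA_even _ h, hs, Matrix.mulVec_neg]
      simp
  -- pointwise antisymmetry for energy
  have key2 : ∀ (a b sa sb : Fin d → ℝ),
      a ⬝ᵥ (A (a - b)).mulVec (sa - sb) + b ⬝ᵥ (A (b - a)).mulVec (sb - sa) = 0 := by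
    intro a b sa sb
    by_cases h : a - b = 0
    · have hb : b - a = 0 := by rw [← neg_sub, h, neg_zero]
      rw [h, hb, hA_zero]
      simp
    · have h' : b - a = -(a - b) := by abel
      have hs : sb - sa = -(sa - sb) := by abel
      rw [h', hA_even _ h, hs, Matrix.mulVec_neg, dotProduct_neg]
      have : a ⬝ᵥ (A (a - b)).mulVec (sa - sb) - b ⬝ᵥ (A (a - b)).mulVec (sa - sb)
          = (a - b) ⬝ᵥ (A (a - b)).mulVec (sa - sb) := by
        rw [sub_dotProduct]
      rw [← sub_eq_add_neg, this, Matrix.dotProduct_mulVec, ← Matrix.mulVec_transpose,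
        (hA_symm _ h).eq, hA_proj _ h, zero_dotProduct]
  -- double-sum vanishes (momentum)
  have hsum1 : ∀ t : ℝ,
      ∑ i : Fin N, ∑ j : Fin N,
        (A (v i t - v j t)).mulVec (s (t, v i t) - s (t, v j t)) = 0 := by
    intro t
    have hswap : (∑ i : Fin N, ∑ j : Fin N,
          (A (v i t - v j t)).mulVec (s (t, v i t) - s (t, v j t)))
        = ∑ i : Fin N, ∑ j : Fin N,
          (A (v j t - v i t)).mulVec (s (t, v j t) - s (t, v i t)) :=
      Finset.sum_comm
    have h2 : (∑ i : Fin N, ∑ j : Fin N,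
          (A (v i t - v j t)).mulVec (s (t, v i t) - s (t, v j t)))
        + (∑ i : Fin N, ∑ j : Fin N,
          (A (v i t - v j t)).mulVec (s (t, v i t) - s (t, v j t))) = 0 := by
      nth_rewrite 2 [hswap]
      rw [← Finset.sum_add_distrib]
      refine Finset.sum_eq_zero fun i _ => ?_
      rw [← Finset.sum_add_distrib]
      exact Finset.sum_eq_zero fun j _ => key1 _ _ _ _
    exact aux_self_add_self_zero h2
  -- double-sum vanishes (energy)
  have hsum2 : ∀ t : ℝ,
      ∑ i : Fin N, ∑ j : Fin N,
        v i t ⬝ᵥ (A (v i t - v j t)).mulVec (s (t, v i t) - s (t, v j t)) = 0 := by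
    intro t
    have hswap : (∑ i : Fin N, ∑ j : Fin N,
          v i t ⬝ᵥ (A (v i t - v j t)).mulVec (s (t, v i t) - s (t, v j t)))
        = ∑ i : Fin N, ∑ j : Fin N,
          v j t ⬝ᵥ (A (v j t - v i t)).mulVec (s (t, v j t) - s (t, v i t)) :=
      Finset.sum_comm
    have h2 : (∑ i : Fin N, ∑ j : Fin N,
          v i t ⬝ᵥ (A (v i t - v j t)).mulVec (s (t, v i t) - s (t, v j t)))
        + (∑ i : Fin N, ∑ j : Fin N,
          v i t ⬝ᵥ (A (v i t - v j t)).mulVec (s (t, v i t) - s (t, v j t))) = 0 := by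
      nth_rewrite 2 [hswap]
      rw [← Finset.sum_add_distrib]
      refine Finset.sum_eq_zero fun i _ => ?_
      rw [← Finset.sum_add_distrib]
      exact Finset.sum_eq_zero fun j _ => key2 _ _ _ _
    exact aux_self_add_self_zero h2
  -- momentum is constant
  have hmom : ∀ t : ℝ, HasDerivAt (fun t => ∑ i : Fin N, v i t) 0 t := by
    intro t
    have h := HasDerivAt.fun_sum (fun i (_ : i ∈ Finset.univ) => hode i t)
    have hz : ∑ i : Fin N, (-((1 : ℝ) / (N : ℝ))) •
        ∑ j : Fin N, (A (v i t - v j t)).mulVec (s (t, v i t) - s (t, v j t))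
        = (0 : Fin d → ℝ) := by
      rw [← Finset.smul_sum, hsum1 t, smul_zero]
    rwa [hz] at h
  have hmom_const : ∀ t t' : ℝ, (∑ i : Fin N, v i t) = ∑ i : Fin N, v i t' := by
    intro t t'
    exact is_const_of_deriv_eq_zero (fun x => (hmom x).differentiableAt)
      (fun x => (hmom x).deriv) t t'
  -- energy is constant
  have hen : ∀ t : ℝ,
      HasDerivAt (fun t => ∑ i : Fin N, ∑ k : Fin d, v i t k ^ 2) 0 t := by
    intro t
    have hcomp : ∀ (i : Fin N) (k : Fin d), HasDerivAt (fun t => v i t k)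
        (((-((1 : ℝ) / (N : ℝ))) •
          ∑ j : Fin N, (A (v i t - v j t)).mulVec (s (t, v i t) - s (t, v j t))) k) t :=
      fun i k => hasDerivAt_pi.mp (hode i t) k
    have h := HasDerivAt.fun_sum (fun i (_ : i ∈ Finset.univ) =>
      HasDerivAt.fun_sum (fun k (_ : k ∈ Finset.univ) => (hcomp i k).pow 2))
    have hz : (∑ i : Fin N, ∑ k : Fin d, (2 : ℕ) * v i t k ^ (2 - 1) *
        (((-((1 : ℝ) / (N : ℝ))) •
          ∑ j : Fin N, (A (v i t - v j t)).mulVec (s (t, v i t) - s (t, v j t))) k))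
        = (0 : ℝ) := by
      have : ∀ i : Fin N, ∑ k : Fin d, (2 : ℕ) * v i t k ^ (2 - 1) *
          (((-((1 : ℝ) / (N : ℝ))) •
            ∑ j : Fin N, (A (v i t - v j t)).mulVec (s (t, v i t) - s (t, v j t))) k)
          = (-(2 / (N : ℝ))) *
            ∑ j : Fin N, v i t ⬝ᵥ (A (v i t - v j t)).mulVec (s (t, v i t) - s (t, v j t)) := by
        intro i
        simp only [Pi.smul_apply, Finset.sum_apply, smul_eq_mul, pow_one, Nat.cast_ofNat,
          dotProduct, Finset.mul_sum]
        rw [Finset.sum_comm]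
        refine Finset.sum_congr rfl fun j _ => Finset.sum_congr rfl fun k _ => ?_
        ring
      rw [Finset.sum_congr rfl fun i _ => this i, ← Finset.mul_sum, hsum2 t, mul_zero]
    rwa [hz] at h
  have hen_const : ∀ t t' : ℝ,
      (∑ i : Fin N, ∑ k : Fin d, v i t k ^ 2) = ∑ i : Fin N, ∑ k : Fin d, v i t' k ^ 2 := by
    intro t t'
    exact is_const_of_deriv_eq_zero (fun x => (hen x).differentiableAt)
      (fun x => (hen x).deriv) t t'
  exact ⟨fun t t' => by rw [hmom_const t t'], fun t t' => by rw [hen_const t t']⟩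
end

section
/- Let d, N ≥ 1, let A : ℝ^d → Matrix (Fin d) (Fin d) ℝ satisfy, for every z ≠ 0: A(z) is symmetric, A(−z) = A(z), and A(z)·z = 0, with A(0) = 0. Given v₁, …, v_N ∈ ℝ^d, s₁, …, s_N ∈ ℝ^d, a time step Δt ∈ ℝ, define G(vᵢ) := (1/N) ∑_{j=1}^N A(vᵢ − v_j)(sᵢ − s_j) and vᵢ⁺ := vᵢ − Δt · G(vᵢ). Then (1/N) ∑_{i=1}^N |vᵢ⁺|² = (1/N) ∑_{i=1}^N |vᵢ|² + Δt² (1/N) ∑_{i=1}^N |G(vᵢ)|²; in particular the kinetic energy is conserved up to O(Δt) per unit time. -/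
open Matrix


/-- Energy balance of the forward-Euler step of the score-based
particle method: with `G(vᵢ) = (1/N) ∑ⱼ A(vᵢ - vⱼ)(sᵢ - sⱼ)` and
`vᵢ⁺ = vᵢ - Δt G(vᵢ)`, for a symmetric, even kernel with the projection property,
`(1/N) ∑ᵢ |vᵢ⁺|² = (1/N) ∑ᵢ |vᵢ|² + Δt² (1/N) ∑ᵢ |G(vᵢ)|²`,
so kinetic energy is conserved up to `O(Δt)` per unit time. -/
theorem stmt3 (d N : ℕ) (hd : 1 ≤ d) (hN : 1 ≤ N)
    (A : (Fin d → ℝ) → Matrix (Fin d) (Fin d) ℝ)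
    (hA_symm : ∀ z : Fin d → ℝ, z ≠ 0 → (A z).IsSymm)
    (hA_even : ∀ z : Fin d → ℝ, z ≠ 0 → A (-z) = A z)
    (hA_proj : ∀ z : Fin d → ℝ, z ≠ 0 → (A z).mulVec z = 0)
    (hA_zero : A 0 = 0)
    (v s : Fin N → Fin d → ℝ) (Δt : ℝ)
    (G : Fin N → Fin d → ℝ)
    (hG : ∀ i, G i = ((1 : ℝ) / (N : ℝ)) • ∑ j : Fin N, (A (v i - v j)).mulVec (s i - s j))
    (vp : Fin N → Fin d → ℝ)
    (hvp : ∀ i, vp i = v i - Δt • G i) :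
    ((1 : ℝ) / (N : ℝ)) * ∑ i : Fin N, ∑ k : Fin d, vp i k ^ 2
      = ((1 : ℝ) / (N : ℝ)) * ∑ i : Fin N, ∑ k : Fin d, v i k ^ 2
        + Δt ^ 2 * (((1 : ℝ) / (N : ℝ)) * ∑ i : Fin N, ∑ k : Fin d, G i k ^ 2) := by
  -- pairwise interaction term
  set f : Fin N → Fin N → ℝ :=
    fun i j => v i ⬝ᵥ (A (v i - v j)).mulVec (s i - s j) with hf
  have hanti : ∀ i j, f i j + f j i = 0 := by
    intro i j
    by_cases h : v i - v j = 0
    · have h' : v j - v i = 0 := by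
        have := neg_eq_zero.mpr h
        rwa [neg_sub] at this
      simp [hf, h, h', hA_zero, Matrix.zero_mulVec]
    · have h' : v j - v i = -(v i - v j) := by ring
      have hAe : A (v j - v i) = A (v i - v j) := by rw [h']; exact hA_even _ h
      have hs : s j - s i = -(s i - s j) := by ring
      have : f j i = - (v j ⬝ᵥ (A (v i - v j)).mulVec (s i - s j)) := by
        show v j ⬝ᵥ (A (v j - v i)).mulVec (s j - s i) = _
        rw [hAe, hs, Matrix.mulVec_neg, dotProduct_neg]
      rw [hf]
      simp only [this]
      have key : (v i - v j) ⬝ᵥ (A (v i - v j)).mulVec (s i - s j) = 0 := by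
        rw [Matrix.dotProduct_mulVec, ← Matrix.mulVec_transpose,
          (hA_symm _ h).eq, hA_proj _ h, zero_dotProduct]
      have expand : v i ⬝ᵥ (A (v i - v j)).mulVec (s i - s j)
          - v j ⬝ᵥ (A (v i - v j)).mulVec (s i - s j)
          = (v i - v j) ⬝ᵥ (A (v i - v j)).mulVec (s i - s j) := by
        rw [sub_dotProduct]
      linarith [key, expand]
  have hdouble : ∑ i : Fin N, ∑ j : Fin N, f i j = 0 := by
    have h2 : (∑ i : Fin N, ∑ j : Fin N, f i j) + (∑ i : Fin N, ∑ j : Fin N, f i j) = 0 := by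
      nth_rewrite 2 [Finset.sum_comm]
      rw [← Finset.sum_add_distrib]
      simp only [← Finset.sum_add_distrib]
      exact Finset.sum_eq_zero fun i _ => Finset.sum_eq_zero fun j _ => hanti i j
    linarith
  -- cross term vanishes
  have hcross : ∑ i : Fin N, ∑ k : Fin d, v i k * G i k = 0 := by
    have : ∀ i, ∑ k : Fin d, v i k * G i k = ((1 : ℝ) / (N : ℝ)) * ∑ j : Fin N, f i j := by
      intro i
      have h1 : ∑ k : Fin d, v i k * G i k = v i ⬝ᵥ G i := rfl
      rw [h1, hG i, dotProduct_smul, smul_eq_mul]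
      congr 1
      simp only [hf, dotProduct, Finset.sum_apply, Finset.mul_sum]
      exact Finset.sum_comm
    rw [Finset.sum_congr rfl fun i _ => this i, ← Finset.mul_sum, hdouble, mul_zero]
  have hexp : ∑ i : Fin N, ∑ k : Fin d, vp i k ^ 2
      = ∑ i : Fin N, ∑ k : Fin d, v i k ^ 2
        - 2 * Δt * ∑ i : Fin N, ∑ k : Fin d, v i k * G i k
        + Δt ^ 2 * ∑ i : Fin N, ∑ k : Fin d, G i k ^ 2 := by
    have : ∀ i k, vp i k ^ 2 = v i k ^ 2 - 2 * Δt * (v i k * G i k) + Δt ^ 2 * G i k ^ 2 := by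
      intro i k
      rw [hvp i]
      simp only [Pi.sub_apply, Pi.smul_apply, smul_eq_mul]
      ring
    simp only [this, Finset.sum_add_distrib, Finset.sum_sub_distrib,
      ← Finset.mul_sum]
  rw [hexp, hcross]
  ring
end

section
/- Let d, N ≥ 1, let A : ℝ^d → Matrix (Fin d) (Fin d) ℝ satisfy A(−z) = A(z) for all z. Given v₁, …, v_N ∈ ℝ^d, s₁, …, s_N ∈ ℝ^d, a time step Δt ∈ ℝ, suppose v₁⁺, …, v_N⁺ ∈ ℝ^d satisfy the implicit midpoint relation vᵢ⁺ = vᵢ − Δt (1/N) ∑_{j=1}^N A(mᵢ − m_j)(sᵢ − s_j), where mᵢ := (vᵢ + vᵢ⁺)/2. Then ∑_{i=1}^N vᵢ⁺ = ∑_{i=1}^N vᵢ, i.e. the midpoint scheme conserves momentum exactly. -/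
/-- The implicit midpoint discretization of the score-based
particle method, `vᵢ⁺ = vᵢ - (Δt/N) ∑ⱼ A(mᵢ - mⱼ)(sᵢ - sⱼ)` with midpoints
`mᵢ = (vᵢ + vᵢ⁺)/2`, conserves momentum exactly, using only evenness of `A`. -/
theorem stmt4 (d N : ℕ) (hd : 1 ≤ d) (hN : 1 ≤ N)
    (A : (Fin d → ℝ) → Matrix (Fin d) (Fin d) ℝ)
    (hA_even : ∀ z : Fin d → ℝ, A (-z) = A z)
    (v s : Fin N → Fin d → ℝ) (Δt : ℝ)
    (vp : Fin N → Fin d → ℝ)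
    (m : Fin N → Fin d → ℝ)
    (hm : ∀ i, m i = ((1 : ℝ) / 2) • (v i + vp i))
    (hvp : ∀ i, vp i
      = v i - (Δt * ((1 : ℝ) / (N : ℝ))) • ∑ j : Fin N, (A (m i - m j)).mulVec (s i - s j)) :
    ∑ i : Fin N, vp i = ∑ i : Fin N, v i := by
  have key : ∑ i : Fin N, ∑ j : Fin N, (A (m i - m j)).mulVec (s i - s j) = 0 := by
    have hswap : ∀ i j : Fin N, (A (m j - m i)).mulVec (s j - s i)
        = -((A (m i - m j)).mulVec (s i - s j)) := by
      intro i j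
      have h1 : m j - m i = -(m i - m j) := by ring_nf
      have h2 : s j - s i = -(s i - s j) := by ring_nf
      rw [h1, h2, hA_even, Matrix.mulVec_neg]
    have := Finset.sum_comm (s := Finset.univ) (t := Finset.univ)
      (f := fun i j : Fin N => (A (m i - m j)).mulVec (s i - s j))
    have h2 : ∑ i : Fin N, ∑ j : Fin N, (A (m i - m j)).mulVec (s i - s j)
        = -∑ i : Fin N, ∑ j : Fin N, (A (m i - m j)).mulVec (s i - s j) := by
      calc ∑ i : Fin N, ∑ j : Fin N, (A (m i - m j)).mulVec (s i - s j)
          = ∑ j : Fin N, ∑ i : Fin N, (A (m i - m j)).mulVec (s i - s j) := this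
        _ = ∑ i : Fin N, ∑ j : Fin N, (A (m j - m i)).mulVec (s j - s i) := rfl
        _ = -∑ i : Fin N, ∑ j : Fin N, (A (m i - m j)).mulVec (s i - s j) := by
            rw [← Finset.sum_neg_distrib]
            refine Finset.sum_congr rfl fun i _ => ?_
            rw [← Finset.sum_neg_distrib]
            exact Finset.sum_congr rfl fun j _ => hswap i j
    have h3 : (2:ℝ) • (∑ i : Fin N, ∑ j : Fin N, (A (m i - m j)).mulVec (s i - s j)) = 0 := by
      rw [two_smul]; nth_rewrite 1 [h2]; exact neg_add_cancel _
    exact (smul_eq_zero.mp h3).resolve_left (by norm_num)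
  simp only [hvp, Finset.sum_sub_distrib, ← Finset.smul_sum, key, smul_zero, sub_zero]
end

section
/- Let d, N ≥ 1, let A : ℝ^d → Matrix (Fin d) (Fin d) ℝ satisfy, for every z ≠ 0: A(z) is symmetric, A(−z) = A(z), and A(z)·z = 0, with A(0) = 0. Given v₁, …, v_N ∈ ℝ^d, s₁, …, s_N ∈ ℝ^d, a time step Δt ∈ ℝ, suppose v₁⁺, …, v_N⁺ ∈ ℝ^d satisfy the implicit midpoint relation vᵢ⁺ = vᵢ − Δt (1/N) ∑_{j=1}^N A(mᵢ − m_j)(sᵢ − s_j), where mᵢ := (vᵢ + vᵢ⁺)/2. Then ∑_{i=1}^N |vᵢ⁺|² = ∑_{i=1}^N |vᵢ|², i.e. the midpoint scheme conserves kinetic energy exactly. -/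
open Matrix Finset


lemma mySumDotProduct {n p : ℕ} (u : Fin p → Fin n → ℝ) (w : Fin n → ℝ) :
    (∑ x : Fin p, u x) ⬝ᵥ w = ∑ x : Fin p, u x ⬝ᵥ w := by
  simp only [dotProduct, Finset.sum_apply, Finset.sum_mul]
  exact Finset.sum_comm

/-- The implicit midpoint discretization of the score-based
particle method, `vᵢ⁺ = vᵢ - (Δt/N) ∑ⱼ A(mᵢ - mⱼ)(sᵢ - sⱼ)` with midpoints
`mᵢ = (vᵢ + vᵢ⁺)/2`, conserves kinetic energy exactly for a symmetric, even
kernel `A` with the projection property `A(z) z = 0` (and `A 0 = 0`). -/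
theorem stmt5 (d N : ℕ) (hd : 1 ≤ d) (hN : 1 ≤ N)
    (A : (Fin d → ℝ) → Matrix (Fin d) (Fin d) ℝ)
    (hA_symm : ∀ z : Fin d → ℝ, z ≠ 0 → (A z).IsSymm)
    (hA_even : ∀ z : Fin d → ℝ, z ≠ 0 → A (-z) = A z)
    (hA_proj : ∀ z : Fin d → ℝ, z ≠ 0 → (A z).mulVec z = 0)
    (hA_zero : A 0 = 0)
    (v s : Fin N → Fin d → ℝ) (Δt : ℝ)
    (vp : Fin N → Fin d → ℝ)
    (m : Fin N → Fin d → ℝ)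
    (hm : ∀ i, m i = ((1 : ℝ) / 2) • (v i + vp i))
    (hvp : ∀ i, vp i
      = v i - (Δt * ((1 : ℝ) / (N : ℝ))) • ∑ j : Fin N, (A (m i - m j)).mulVec (s i - s j)) :
    ∑ i : Fin N, ∑ k : Fin d, vp i k ^ 2 = ∑ i : Fin N, ∑ k : Fin d, v i k ^ 2 := by
  set c : ℝ := Δt * ((1 : ℝ) / (N : ℝ)) with hc
  set f : Fin N → Fin N → ℝ :=
    fun i j => ((A (m i - m j)).mulVec (s i - s j)) ⬝ᵥ (m i) with hf
  -- pairwise cancellation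
  have hpair : ∀ i j, f i j + f j i = 0 := by
    intro i j
    by_cases hz : m i - m j = 0
    · have h2 : m j - m i = 0 := by
        rw [sub_eq_zero] at hz ⊢; exact hz.symm
      simp [hf, hz, h2, hA_zero]
    · have hz' : m j - m i ≠ 0 := fun h => hz (by
        rw [sub_eq_zero] at h ⊢; exact h.symm)
      have he : A (m j - m i) = A (m i - m j) := by
        have := hA_even (m i - m j) hz
        rwa [neg_sub] at this
      have hs : (A (m i - m j))ᵀ = A (m i - m j) := hA_symm _ hz
      have hsji : s j - s i = -(s i - s j) := by rw [neg_sub]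
      have key : f i j + f j i
          = ((A (m i - m j)).mulVec (s i - s j)) ⬝ᵥ (m i - m j) := by
        simp only [hf, he, hsji, Matrix.mulVec_neg, neg_dotProduct,
          dotProduct_sub]
        ring
      rw [key, dotProduct_comm, Matrix.dotProduct_mulVec]
      have hv : (A (m i - m j)).vecMul (m i - m j) = 0 := by
        rw [← Matrix.mulVec_transpose, hs, hA_proj _ hz]
      rw [hv, zero_dotProduct]
  have key0 : ∑ i : Fin N, ∑ j : Fin N, f i j = 0 := by
    have h2 : (∑ i : Fin N, ∑ j : Fin N, f i j) + (∑ i : Fin N, ∑ j : Fin N, f i j) = 0 := by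
      nth_rewrite 2 [Finset.sum_comm]
      rw [← Finset.sum_add_distrib]
      simp only [← Finset.sum_add_distrib]
      exact Finset.sum_eq_zero fun i _ => Finset.sum_eq_zero fun j _ => hpair i j
    linarith
  have expand : ∀ i : Fin N,
      (∑ k : Fin d, vp i k ^ 2) - (∑ k : Fin d, v i k ^ 2)
        = (vp i - v i) ⬝ᵥ (vp i + v i) := by
    intro i
    rw [← Finset.sum_sub_distrib]
    apply Finset.sum_congr rfl
    intro k _
    simp only [dotProduct, Pi.sub_apply, Pi.add_apply]
    ring
  have hdiff : ∀ i : Fin N, vp i - v i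
      = -(c • ∑ j : Fin N, (A (m i - m j)).mulVec (s i - s j)) := by
    intro i
    rw [hvp i]
    abel
  have hsum2 : ∀ i : Fin N, vp i + v i = (2 : ℝ) • m i := by
    intro i
    rw [hm i, smul_smul]
    norm_num
    abel
  have main : (∑ i : Fin N, ∑ k : Fin d, vp i k ^ 2)
      - (∑ i : Fin N, ∑ k : Fin d, v i k ^ 2)
      = -(2 * c) * ∑ i : Fin N, ∑ j : Fin N, f i j := by
    rw [← Finset.sum_sub_distrib, Finset.mul_sum]
    apply Finset.sum_congr rfl
    intro i _
    rw [expand i, hdiff i, hsum2 i]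
    simp only [neg_dotProduct, smul_dotProduct, dotProduct_smul,
      mySumDotProduct, hf, smul_eq_mul]
    ring
  rw [key0, mul_zero] at main
  linarith
end

section
/- Let γ ∈ ℝ and let ρ : ℝ³ → ℝ be Lebesgue-measurable with ρ ≥ 0 a.e., ∫_{ℝ³} ρ(v) dv = 1, ρ supported in a bounded set, and such that v ↦ |v|^γ |v|² ρ(v) is Lebesgue-integrable. Then the 3×3 matrix B := ∫_{ℝ³} |v|^γ (|v|² I₃ − v ⊗ v) ρ(v) dv, whose entries are B_{kk} = ∫ |v|^γ (|v|² − v_k²) ρ dv and B_{kl} = −∫ |v|^γ v_k v_l ρ dv for k ≠ l, is symmetric positive definite. -/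
open MeasureTheory

private lemma aux_int (γ : ℝ) (ρ : (Fin 3 → ℝ) → ℝ) (hmeas : Measurable ρ)
    (hint : Integrable fun v : Fin 3 → ℝ => Real.sqrt (∑ k, v k ^ 2) ^ γ * (∑ k, v k ^ 2) * ρ v)
    (q : (Fin 3 → ℝ) → ℝ) (hq : Measurable q) (C : ℝ) (hC0 : 0 ≤ C)
    (hC : ∀ v, |q v| ≤ C * (∑ k, v k ^ 2)) :
    Integrable fun v : Fin 3 → ℝ => Real.sqrt (∑ k, v k ^ 2) ^ γ * q v * ρ v := by
  have hS : Measurable fun v : Fin 3 → ℝ => ∑ k, v k ^ 2 :=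
    Finset.measurable_sum _ fun i _ => (measurable_pi_apply i).pow_const 2
  have hw : Measurable fun v : Fin 3 → ℝ => Real.sqrt (∑ k, v k ^ 2) ^ γ :=
    hS.sqrt.pow measurable_const
  refine (hint.abs.const_mul C).mono ((hw.mul hq).mul hmeas).aestronglyMeasurable
    (Filter.Eventually.of_forall fun v => ?_)
  have h1 : (0:ℝ) ≤ Real.sqrt (∑ k, v k ^ 2) ^ γ := by positivity
  have h2 : (0:ℝ) ≤ ∑ k, v k ^ 2 := by positivity
  simp only [Real.norm_eq_abs, abs_mul, abs_abs, abs_of_nonneg h1, abs_of_nonneg h2,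
    abs_of_nonneg hC0]
  have h3 := mul_le_mul_of_nonneg_left (hC v) (mul_nonneg h1 (abs_nonneg (ρ v)))
  nlinarith [abs_nonneg (ρ v)]

private lemma aux_span (x v : Fin 3 → ℝ) (hx : x ≠ 0)
    (ha : x 0 * v 1 - x 1 * v 0 = 0) (hb : x 0 * v 2 - x 2 * v 0 = 0)
    (hc : x 1 * v 2 - x 2 * v 1 = 0) :
    v ∈ (Submodule.span ℝ {x} : Submodule ℝ (Fin 3 → ℝ)) := by
  have hcase : x 0 ≠ 0 ∨ x 1 ≠ 0 ∨ x 2 ≠ 0 := by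
    by_contra h
    push_neg at h
    apply hx
    funext i
    fin_cases i
    · exact h.1
    · exact h.2.1
    · exact h.2.2
  rcases hcase with h0 | h1 | h2
  · refine Submodule.mem_span_singleton.2 ⟨v 0 / x 0, ?_⟩
    funext i; fin_cases i
    · show (v 0 / x 0) * x 0 = v 0; field_simp
    · show (v 0 / x 0) * x 1 = v 1
      rw [div_mul_eq_mul_div, div_eq_iff h0]; linear_combination -ha
    · show (v 0 / x 0) * x 2 = v 2
      rw [div_mul_eq_mul_div, div_eq_iff h0]; linear_combination -hb
  · refine Submodule.mem_span_singleton.2 ⟨v 1 / x 1, ?_⟩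
    funext i; fin_cases i
    · show (v 1 / x 1) * x 0 = v 0
      rw [div_mul_eq_mul_div, div_eq_iff h1]; linear_combination ha
    · show (v 1 / x 1) * x 1 = v 1; field_simp
    · show (v 1 / x 1) * x 2 = v 2
      rw [div_mul_eq_mul_div, div_eq_iff h1]; linear_combination -hc
  · refine Submodule.mem_span_singleton.2 ⟨v 2 / x 2, ?_⟩
    funext i; fin_cases i
    · show (v 2 / x 2) * x 0 = v 0
      rw [div_mul_eq_mul_div, div_eq_iff h2]; linear_combination hb
    · show (v 2 / x 2) * x 1 = v 1
      rw [div_mul_eq_mul_div, div_eq_iff h2]; linear_combination hc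
    · show (v 2 / x 2) * x 2 = v 2; field_simp


/-- Strict positive definiteness of the averaged 3D Landau kernel.
For an a.e. nonnegative measurable probability density `ρ` on `ℝ³` with bounded
support such that `|v|^γ |v|² ρ(v)` is integrable, the matrix
`B = ∫ |v|^γ (|v|² I₃ - v ⊗ v) ρ(v) dv` is symmetric positive definite. -/
theorem stmt7 (γ : ℝ) (ρ : (Fin 3 → ℝ) → ℝ)
    (hmeas : Measurable ρ)
    (hpos : ∀ᵐ v ∂(volume : Measure (Fin 3 → ℝ)), 0 ≤ ρ v)
    (hmass : ∫ v : Fin 3 → ℝ, ρ v = 1)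
    (hbdd : Bornology.IsBounded (Function.support ρ))
    (hint : Integrable fun v : Fin 3 → ℝ =>
      Real.sqrt (∑ k, v k ^ 2) ^ γ * (∑ k, v k ^ 2) * ρ v)
    (B : Matrix (Fin 3) (Fin 3) ℝ)
    (hB : ∀ k l, B k l = ∫ v : Fin 3 → ℝ,
      Real.sqrt (∑ m, v m ^ 2) ^ γ * ((if k = l then ∑ m, v m ^ 2 else 0) - v k * v l) * ρ v) :
    B.PosDef := by

  -- single coordinate squares are bounded by the sum
  have hk2 : ∀ (v : Fin 3 → ℝ) (m : Fin 3), v m ^ 2 ≤ ∑ j, v j ^ 2 := fun v m =>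
    Finset.single_le_sum (fun j _ => sq_nonneg (v j)) (Finset.mem_univ m)
  -- integrability of each entry's integrand
  have hint_kl : ∀ k l : Fin 3, Integrable fun v : Fin 3 → ℝ =>
      Real.sqrt (∑ m, v m ^ 2) ^ γ * ((if k = l then ∑ m, v m ^ 2 else 0) - v k * v l) * ρ v := by
    intro k l
    refine aux_int γ ρ hmeas hint _ ?_ 2 (by norm_num) ?_
    · refine Measurable.sub ?_ ((measurable_pi_apply k).mul (measurable_pi_apply l))
      by_cases h : k = l
      · simpa [h] using Finset.measurable_sum (f := fun (i : Fin 3) (v : Fin 3 → ℝ) => v i ^ 2)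
          Finset.univ fun i _ => (measurable_pi_apply i).pow_const 2
      · simp [h]
    · intro v
      have hS0 : (0:ℝ) ≤ ∑ j, v j ^ 2 := by positivity
      have habs : |v k * v l| ≤ ∑ j, v j ^ 2 := by
        rw [abs_mul]
        nlinarith [sq_abs (v k), sq_abs (v l), hk2 v k, hk2 v l,
          sq_nonneg (|v k| - |v l|), abs_nonneg (v k), abs_nonneg (v l)]
      by_cases h : k = l
      · have hll := hk2 v l
        rw [sq] at hll
        simp only [h, if_true]
        rw [abs_of_nonneg (by linarith)]
        linarith [mul_self_nonneg (v l)]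
      · simp only [h, if_false, zero_sub, abs_neg]
        linarith
  -- symmetry
  have hsym : ∀ k l, B l k = B k l := by
    intro k l
    rw [hB, hB]
    congr 1; funext v
    by_cases h : k = l
    · simp [h]
    · simp only [h, Ne.symm h, if_false]
      ring
  refine Matrix.PosDef.of_dotProduct_mulVec_pos ?_ ?_
  · ext i j
    rw [Matrix.conjTranspose_apply, star_trivial]
    exact hsym i j
  intro x hx
  -- the quadratic form as a single integral
  have hQmeas : Measurable fun v : Fin 3 → ℝ =>
      (∑ m, v m ^ 2) * (∑ m, x m ^ 2) - (∑ m, x m * v m) ^ 2 := by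
    have hS : Measurable fun v : Fin 3 → ℝ => ∑ m, v m ^ 2 :=
      Finset.measurable_sum _ fun i _ => (measurable_pi_apply i).pow_const 2
    have hD : Measurable fun v : Fin 3 → ℝ => ∑ m, x m * v m :=
      Finset.measurable_sum _ fun i _ => (measurable_const.mul (measurable_pi_apply i))
    exact (hS.mul measurable_const).sub (hD.pow_const 2)
  have hLag : ∀ v : Fin 3 → ℝ,
      (∑ m, v m ^ 2) * (∑ m, x m ^ 2) - (∑ m, x m * v m) ^ 2 =
        (x 0 * v 1 - x 1 * v 0) ^ 2 + (x 0 * v 2 - x 2 * v 0) ^ 2 +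
          (x 1 * v 2 - x 2 * v 1) ^ 2 := by
    intro v; simp only [Fin.sum_univ_three]; ring
  have hQnn : ∀ v : Fin 3 → ℝ,
      0 ≤ (∑ m, v m ^ 2) * (∑ m, x m ^ 2) - (∑ m, x m * v m) ^ 2 := by
    intro v; rw [hLag v]; positivity
  have hFint : Integrable fun v : Fin 3 → ℝ =>
      Real.sqrt (∑ m, v m ^ 2) ^ γ *
        ((∑ m, v m ^ 2) * (∑ m, x m ^ 2) - (∑ m, x m * v m) ^ 2) * ρ v := by
    refine aux_int γ ρ hmeas hint _ hQmeas (∑ m, x m ^ 2) (by positivity) fun v => ?_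
    rw [abs_of_nonneg (hQnn v)]
    nlinarith [sq_nonneg (∑ m, x m * v m)]
  have key : dotProduct (star x) (B.mulVec x) = ∫ v : Fin 3 → ℝ,
      Real.sqrt (∑ m, v m ^ 2) ^ γ *
        ((∑ m, v m ^ 2) * (∑ m, x m ^ 2) - (∑ m, x m * v m) ^ 2) * ρ v := by
    have h1 : dotProduct (star x) (B.mulVec x) = ∑ k, ∑ l, x k * x l * B k l := by
      simp only [star_trivial, dotProduct, Matrix.mulVec, Finset.mul_sum]
      exact Finset.sum_congr rfl fun k _ => Finset.sum_congr rfl fun l _ => by ring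
    rw [h1]
    have h2 : ∀ k l : Fin 3, x k * x l * B k l = ∫ v : Fin 3 → ℝ,
        x k * x l * (Real.sqrt (∑ m, v m ^ 2) ^ γ *
          ((if k = l then ∑ m, v m ^ 2 else 0) - v k * v l) * ρ v) := by
      intro k l
      rw [hB, ← integral_const_mul]
    calc ∑ k, ∑ l, x k * x l * B k l
        = ∑ k : Fin 3, ∑ l : Fin 3, ∫ v : Fin 3 → ℝ,
            x k * x l * (Real.sqrt (∑ m, v m ^ 2) ^ γ *
              ((if k = l then ∑ m, v m ^ 2 else 0) - v k * v l) * ρ v) :=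
          Finset.sum_congr rfl fun k _ => Finset.sum_congr rfl fun l _ => h2 k l
      _ = ∫ v : Fin 3 → ℝ, ∑ k : Fin 3, ∑ l : Fin 3,
            x k * x l * (Real.sqrt (∑ m, v m ^ 2) ^ γ *
              ((if k = l then ∑ m, v m ^ 2 else 0) - v k * v l) * ρ v) := by
          rw [integral_finset_sum _ fun k _ => integrable_finset_sum _ fun l _ =>
            (hint_kl k l).const_mul (x k * x l)]
          exact Finset.sum_congr rfl fun k _ =>
            (integral_finset_sum _ fun l _ => (hint_kl k l).const_mul (x k * x l)).symm
      _ = ∫ v : Fin 3 → ℝ, Real.sqrt (∑ m, v m ^ 2) ^ γ *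
            ((∑ m, v m ^ 2) * (∑ m, x m ^ 2) - (∑ m, x m * v m) ^ 2) * ρ v := by
          congr 1; funext v
          simp only [Fin.sum_univ_three]
          norm_num [Fin.ext_iff]
          ring
  rw [key]
  have hFnn : 0 ≤ᵐ[(volume : Measure (Fin 3 → ℝ))] fun v : Fin 3 → ℝ =>
      Real.sqrt (∑ m, v m ^ 2) ^ γ *
        ((∑ m, v m ^ 2) * (∑ m, x m ^ 2) - (∑ m, x m * v m) ^ 2) * ρ v := by
    filter_upwards [hpos] with v hv
    have h1 : (0:ℝ) ≤ Real.sqrt (∑ m, v m ^ 2) ^ γ := by positivity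
    exact mul_nonneg (mul_nonneg h1 (hQnn v)) hv
  rw [integral_pos_iff_support_of_nonneg_ae hFnn hFint]
  -- the support of ρ has positive measure
  have hTpos : 0 < (volume : Measure (Fin 3 → ℝ)) (Function.support ρ) := by
    by_contra h
    push_neg at h
    have h0 : (volume : Measure (Fin 3 → ℝ)) (Function.support ρ) = 0 :=
      le_antisymm h zero_le
    have hae : ∀ᵐ v ∂(volume : Measure (Fin 3 → ℝ)), ρ v = 0 := by
      rw [ae_iff]
      simpa [Function.support] using h0
    have := integral_eq_zero_of_ae hae
    rw [hmass] at this
    norm_num at this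
  -- the span of x is a null set
  have hLne : Submodule.span ℝ {x} ≠ (⊤ : Submodule ℝ (Fin 3 → ℝ)) := by
    intro h
    have h1 : Module.finrank ℝ (Submodule.span ℝ {x} : Submodule ℝ (Fin 3 → ℝ)) = 1 :=
      finrank_span_singleton hx
    rw [h, finrank_top] at h1
    simp at h1
  have hLnull : (volume : Measure (Fin 3 → ℝ))
      ((Submodule.span ℝ {x} : Submodule ℝ (Fin 3 → ℝ)) : Set (Fin 3 → ℝ)) = 0 :=
    Measure.addHaar_submodule _ _ hLne
  -- support ρ minus the span is contained in the support of the integrand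
  have hsub : Function.support ρ \
      ((Submodule.span ℝ {x} : Submodule ℝ (Fin 3 → ℝ)) : Set (Fin 3 → ℝ)) ⊆
      Function.support (fun v : Fin 3 → ℝ =>
        Real.sqrt (∑ m, v m ^ 2) ^ γ *
          ((∑ m, v m ^ 2) * (∑ m, x m ^ 2) - (∑ m, x m * v m) ^ 2) * ρ v) := by
    rintro v ⟨hvρ, hvL⟩
    have hv0 : v ≠ 0 := by
      intro h
      exact hvL (h ▸ (Submodule.zero_mem _ : (0 : Fin 3 → ℝ) ∈ Submodule.span ℝ {x}))
    have hwpos : 0 < Real.sqrt (∑ m, v m ^ 2) ^ γ := by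
      apply Real.rpow_pos_of_pos
      apply Real.sqrt_pos.2
      obtain ⟨i, hi⟩ := Function.ne_iff.1 hv0
      have hvi : v i ≠ 0 := by simpa using hi
      have h1 : (0:ℝ) < v i ^ 2 := by positivity
      exact lt_of_lt_of_le h1 (hk2 v i)
    have hQpos : 0 < (∑ m, v m ^ 2) * (∑ m, x m ^ 2) - (∑ m, x m * v m) ^ 2 := by
      rcases (hQnn v).lt_or_eq with h | h
      · exact h
      · exfalso
        apply hvL
        have h' := h.symm
        rw [hLag v] at h'
        have ha : x 0 * v 1 - x 1 * v 0 = 0 := by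
          nlinarith [sq_nonneg (x 0 * v 1 - x 1 * v 0), sq_nonneg (x 0 * v 2 - x 2 * v 0),
            sq_nonneg (x 1 * v 2 - x 2 * v 1)]
        have hb : x 0 * v 2 - x 2 * v 0 = 0 := by
          nlinarith [sq_nonneg (x 0 * v 1 - x 1 * v 0), sq_nonneg (x 0 * v 2 - x 2 * v 0),
            sq_nonneg (x 1 * v 2 - x 2 * v 1)]
        have hc : x 1 * v 2 - x 2 * v 1 = 0 := by
          nlinarith [sq_nonneg (x 0 * v 1 - x 1 * v 0), sq_nonneg (x 0 * v 2 - x 2 * v 0),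
            sq_nonneg (x 1 * v 2 - x 2 * v 1)]
        exact aux_span x v hx ha hb hc
    exact Function.mem_support.2 (mul_ne_zero (mul_ne_zero hwpos.ne' hQpos.ne') hvρ)
  calc (0 : ENNReal) < (volume : Measure (Fin 3 → ℝ)) (Function.support ρ) := hTpos
    _ = (volume : Measure (Fin 3 → ℝ)) (Function.support ρ \
          ((Submodule.span ℝ {x} : Submodule ℝ (Fin 3 → ℝ)) : Set (Fin 3 → ℝ))) :=
        (measure_diff_null hLnull).symm
    _ ≤ _ := measure_mono hsub
end

section
/- Fix d ≥ 1 and an open time interval I ⊆ ℝ. Let f, g : I × ℝ^d → ℝ be C¹, strictly positive, and ℤ^d-periodic in the space variable, and let U, W : I × ℝ^d → ℝ^d be C¹ and ℤ^d-periodic in the space variable. Suppose the continuity equations ∂_t f(t,v) = −∇_v·(U(t,v) f(t,v)) and ∂_t g(t,v) = −∇_v·(W(t,v) g(t,v)) hold pointwise on I × ℝ^d. Then for every t ∈ I, the Kullback–Leibler divergence D(t) := ∫_Q f(t,v) log(f(t,v)/g(t,v)) dv, where Q = [0,1)^d, is differentiable in t with derivative D'(t) = ∫_Q f(t,v) ⟨∇_v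 log(f(t,v)/g(t,v)), U(t,v) − W(t,v)⟩ dv. -/
open MeasureTheory Set

/-- The fundamental domain `Q = [0,1)^d` of the torus `𝕋^d = ℝ^d / ℤ^d`. -/
def unitCube (d : ℕ) : Set (Fin d → ℝ) :=
  Set.univ.pi fun _ => Set.Ico (0 : ℝ) 1

lemma insertNth_one_eq (n : ℕ) (i : Fin (n+1)) (x : Fin n → ℝ) :
    Fin.insertNth i (1:ℝ) x = Fin.insertNth i (0:ℝ) x + fun j => ((Pi.single i 1 : Fin (n+1) → ℤ) j : ℝ) := by
  funext j
  refine Fin.succAboveCases i ?_ ?_ j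
  · simp
  · intro l
    simp [Pi.single_eq_of_ne (Fin.succAbove_ne i l)]

lemma div_int_zero (n : ℕ) (G : Fin (n+1) → (Fin (n+1) → ℝ) → ℝ)
    (hG : ∀ i, ContDiff ℝ 1 (G i))
    (hper : ∀ i (v : Fin (n+1) → ℝ) (m : Fin (n+1) → ℤ), G i (v + fun j => (m j : ℝ)) = G i v) :
    ∫ v in unitCube (n+1), ∑ i, fderiv ℝ (G i) v (Pi.single i 1) = 0 := by
  have hcont : Continuous fun x => ∑ i, fderiv ℝ (G i) x (Pi.single i 1) := by
    refine continuous_finset_sum _ fun i _ => ?_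
    exact (ContinuousLinearMap.apply ℝ ℝ (Pi.single i 1)).continuous.comp
      ((hG i).continuous_fderiv one_ne_zero)
  have key := integral_divergence_of_hasFDerivAt_off_countable'
    (0 : Fin (n+1) → ℝ) 1 zero_le_one G (fun i x => fderiv ℝ (G i) x) ∅ countable_empty
    (fun i => (hG i).continuous.continuousOn)
    (fun x _ i => ((hG i).differentiable one_ne_zero x).hasFDerivAt)
    (hcont.continuousOn.integrableOn_compact isCompact_Icc)
  have hae : (unitCube (n+1) : Set (Fin (n+1) → ℝ)) =ᵐ[volume] Icc (0 : Fin (n+1) → ℝ) 1 := by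
    rw [volume_pi]
    exact Measure.univ_pi_Ico_ae_eq_Icc
  rw [setIntegral_congr_set hae, key]
  refine Finset.sum_eq_zero fun i _ => ?_
  have : ∀ x : Fin n → ℝ, G i (Fin.insertNth i ((1 : Fin (n+1) → ℝ) i) x)
      = G i (Fin.insertNth i ((0 : Fin (n+1) → ℝ) i) x) := by
    intro x
    have h1 : ((1 : Fin (n+1) → ℝ) i) = (1:ℝ) := rfl
    have h0 : ((0 : Fin (n+1) → ℝ) i) = (0:ℝ) := rfl
    rw [h1, h0, insertNth_one_eq, hper]
  simp only [this, sub_self]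

section Slices

variable {d : ℕ} {I : Set ℝ} {X : Type*} [NormedAddCommGroup X] [NormedSpace ℝ X]

lemma slice_contDiff (hI : IsOpen I) {F : ℝ × (Fin d → ℝ) → X}
    (hF : ContDiffOn ℝ 1 F (I ×ˢ Set.univ)) {t : ℝ} (ht : t ∈ I) :
    ContDiff ℝ 1 (fun w : Fin d → ℝ => F (t, w)) := by
  rw [contDiff_iff_contDiffAt]
  intro v
  have h1 : ContDiffAt ℝ 1 F (t, v) :=
    hF.contDiffAt ((hI.prod isOpen_univ).mem_nhds ⟨ht, trivial⟩)
  exact h1.comp v ((contDiff_const.prodMk contDiff_id).contDiffAt)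

lemma time_hasDerivAt (hI : IsOpen I) {F : ℝ × (Fin d → ℝ) → X}
    (hF : ContDiffOn ℝ 1 F (I ×ˢ Set.univ)) {t : ℝ} (ht : t ∈ I) (v : Fin d → ℝ) :
    HasDerivAt (fun τ => F (τ, v)) (fderiv ℝ F (t, v) ((1:ℝ), (0 : Fin d → ℝ))) t := by
  have h1 : ContDiffAt ℝ 1 F (t, v) :=
    hF.contDiffAt ((hI.prod isOpen_univ).mem_nhds ⟨ht, trivial⟩)
  have h2 : HasFDerivAt F (fderiv ℝ F (t, v)) (t, v) :=
    (h1.differentiableAt one_ne_zero).hasFDerivAt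
  have h3 : HasDerivAt (fun τ : ℝ => (τ, v)) ((1:ℝ), (0 : Fin d → ℝ)) t :=
    (hasDerivAt_id t).prodMk (hasDerivAt_const t v)
  simpa [Function.comp_def] using h2.comp_hasDerivAt t h3

end Slices

lemma algebra_key (d : ℕ) (F G L : ℝ) (hF : F ≠ 0) (hG : G ≠ 0)
    (Uk Wk dfk dgk duk dwk : Fin d → ℝ) :
    F * (F⁻¹ * (-∑ k, (Uk k * dfk k + F * duk k)) - G⁻¹ * (-∑ k, (Wk k * dgk k + G * dwk k)))
      + L * (-∑ k, (Uk k * dfk k + F * duk k))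
    = F * ∑ k, (F⁻¹ * dfk k - G⁻¹ * dgk k) * (Uk k - Wk k)
      + ∑ k, (F * (dwk k - ((L + 1) * duk k + Uk k * (F⁻¹ * dfk k - G⁻¹ * dgk k)))
          + (Wk k - (L + 1) * Uk k) * dfk k) := by
  have per : ∀ k ∈ Finset.univ, F * ((F⁻¹ * dfk k - G⁻¹ * dgk k) * (Uk k - Wk k))
      + (F * (dwk k - ((L + 1) * duk k + Uk k * (F⁻¹ * dfk k - G⁻¹ * dgk k)))
          + (Wk k - (L + 1) * Uk k) * dfk k)
      = (F/G) * (Wk k * dgk k + G * dwk k) - (L + 1) * (Uk k * dfk k + F * duk k) := by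
    intro k _
    field_simp
    ring
  rw [Finset.mul_sum, ← Finset.sum_add_distrib, Finset.sum_congr rfl per,
    Finset.sum_sub_distrib, ← Finset.mul_sum, ← Finset.mul_sum]
  field_simp
  ring

set_option maxHeartbeats 2000000 in
/-- Time evolution of the Kullback–Leibler divergence of two
positive `ℤ^d`-periodic `C¹` densities `f, g` solving the continuity equations
`∂ₜ f = -∇·(U f)` and `∂ₜ g = -∇·(W g)` on an open time interval `I`:
`D(t) = ∫_Q f log(f/g)` is differentiable with
`D'(t) = ∫_Q f ⟨∇ log(f/g), U - W⟩`. -/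
theorem stmt8 (d : ℕ) (hd : 1 ≤ d)
    (I : Set ℝ) (hI_open : IsOpen I) (hI_conv : Convex ℝ I)
    (f g : ℝ × (Fin d → ℝ) → ℝ)
    (U W : ℝ × (Fin d → ℝ) → Fin d → ℝ)
    (hf : ContDiffOn ℝ 1 f (I ×ˢ Set.univ)) (hg : ContDiffOn ℝ 1 g (I ×ˢ Set.univ))
    (hU : ContDiffOn ℝ 1 U (I ×ˢ Set.univ)) (hW : ContDiffOn ℝ 1 W (I ×ˢ Set.univ))
    (hf_pos : ∀ p, 0 < f p) (hg_pos : ∀ p, 0 < g p)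
    (hf_per : ∀ (t : ℝ) (v : Fin d → ℝ) (m : Fin d → ℤ),
      f (t, v + fun i => (m i : ℝ)) = f (t, v))
    (hg_per : ∀ (t : ℝ) (v : Fin d → ℝ) (m : Fin d → ℤ),
      g (t, v + fun i => (m i : ℝ)) = g (t, v))
    (hU_per : ∀ (t : ℝ) (v : Fin d → ℝ) (m : Fin d → ℤ),
      U (t, v + fun i => (m i : ℝ)) = U (t, v))
    (hW_per : ∀ (t : ℝ) (v : Fin d → ℝ) (m : Fin d → ℤ),
      W (t, v + fun i => (m i : ℝ)) = W (t, v))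
    (hf_pde : ∀ t ∈ I, ∀ v : Fin d → ℝ,
      fderiv ℝ f (t, v) ((1 : ℝ), (0 : Fin d → ℝ)) =
        -∑ k : Fin d, fderiv ℝ (fun w => U (t, w) k * f (t, w)) v (Pi.single k 1))
    (hg_pde : ∀ t ∈ I, ∀ v : Fin d → ℝ,
      fderiv ℝ g (t, v) ((1 : ℝ), (0 : Fin d → ℝ)) =
        -∑ k : Fin d, fderiv ℝ (fun w => W (t, w) k * g (t, w)) v (Pi.single k 1)) :
    ∀ t ∈ I,
      HasDerivAt (fun τ => ∫ v in unitCube d, f (τ, v) * Real.log (f (τ, v) / g (τ, v)))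
        (∫ v in unitCube d, f (t, v) *
          ∑ k : Fin d, fderiv ℝ (fun w => Real.log (f (t, w) / g (t, w))) v (Pi.single k 1)
            * (U (t, v) k - W (t, v) k)) t := by
  obtain ⟨n, rfl⟩ : ∃ n, d = n + 1 := ⟨d - 1, (Nat.succ_pred_eq_of_pos hd).symm⟩
  intro t ht
  have hfne : ∀ p, f p ≠ 0 := fun p => (hf_pos p).ne'
  have hgne : ∀ p, g p ≠ 0 := fun p => (hg_pos p).ne'
  -- the density φ
  set φ : ℝ × (Fin (n+1) → ℝ) → ℝ := fun p => f p * Real.log (f p / g p) with hφdef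
  have heqφ : φ = fun p => f p * (Real.log (f p) - Real.log (g p)) :=
    funext fun p => by show f p * Real.log (f p / g p) = _; rw [Real.log_div (hfne p) (hgne p)]
  have hφ : ContDiffOn ℝ 1 φ (I ×ˢ Set.univ) := by
    rw [heqφ]
    exact hf.mul ((hf.log fun p _ => hfne p).sub (hg.log fun p _ => hgne p))
  set φ' : ℝ × (Fin (n+1) → ℝ) → ℝ := fun p => fderiv ℝ φ p ((1:ℝ), (0 : Fin (n+1) → ℝ)) with hφ'def
  -- basic sets
  have hQmeas : MeasurableSet (unitCube (n+1)) :=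
    MeasurableSet.univ_pi fun _ => measurableSet_Ico
  have hQsub : unitCube (n+1) ⊆ Icc (0 : Fin (n+1) → ℝ) 1 := fun x hx =>
    Set.mem_Icc.2 ⟨fun i => (hx i trivial).1, fun i => (hx i trivial).2.le⟩
  have hQfin : volume (unitCube (n+1)) < ⊤ :=
    lt_of_le_of_lt (measure_mono hQsub) isCompact_Icc.measure_lt_top
  -- continuity of fderiv
  have hφ'cont : ContinuousOn φ' (I ×ˢ Set.univ) :=
    (ContinuousLinearMap.apply ℝ ℝ ((1:ℝ), (0 : Fin (n+1) → ℝ))).continuous.comp_continuousOn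
      (hφ.continuousOn_fderiv_of_isOpen (hI_open.prod isOpen_univ) le_rfl)
  -- radius
  obtain ⟨ε, hε, hball⟩ : ∃ ε > 0, Metric.closedBall t ε ⊆ I := by
    obtain ⟨ε, hε, h⟩ := Metric.isOpen_iff.1 hI_open t ht
    exact ⟨ε/2, by positivity, (Metric.closedBall_subset_ball (by linarith)).trans h⟩
  have hK : IsCompact ((Metric.closedBall t ε) ×ˢ (Icc (0 : Fin (n+1) → ℝ) 1)) :=
    (isCompact_closedBall _ _).prod isCompact_Icc
  have hKsub : (Metric.closedBall t ε) ×ˢ (Icc (0 : Fin (n+1) → ℝ) 1) ⊆ I ×ˢ Set.univ :=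
    fun p hp => ⟨hball hp.1, trivial⟩
  obtain ⟨C, hC⟩ := hK.exists_bound_of_continuousOn (hφ'cont.mono hKsub)
  -- Leibniz rule
  have main := hasDerivAt_integral_of_dominated_loc_of_deriv_le
    (μ := volume.restrict (unitCube (n+1))) (x₀ := t)
    (F := fun τ v => φ (τ, v)) (F' := fun τ v => φ' (τ, v)) (bound := fun _ => C) (s := Metric.ball t ε) (Metric.ball_mem_nhds t hε)
    (by
      filter_upwards [hI_open.mem_nhds ht] with τ hτ
      exact ((slice_contDiff hI_open hφ hτ).continuous).aestronglyMeasurable)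
    (((slice_contDiff hI_open hφ ht).continuous.continuousOn.integrableOn_compact
      isCompact_Icc).mono_set hQsub)
    (by
      have : Continuous fun v : Fin (n+1) → ℝ => φ' (t, v) := by
        rw [← continuousOn_univ]
        exact hφ'cont.comp (Continuous.continuousOn (by continuity))
          fun v _ => ⟨ht, trivial⟩
      exact this.aestronglyMeasurable)
    (by
      refine (ae_restrict_mem hQmeas).mono fun v hv τ hτ => ?_
      exact hC (τ, v) ⟨Metric.ball_subset_closedBall hτ, hQsub hv⟩)
    (integrableOn_const hQfin.ne)
    (by
      refine Filter.Eventually.of_forall fun v τ hτ => ?_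
      exact time_hasDerivAt hI_open hφ (hball (Metric.ball_subset_closedBall hτ)) v)
  -- the spatial slice functions at time t
  have hFt : ContDiff ℝ 1 (fun w : Fin (n+1) → ℝ => f (t, w)) := slice_contDiff hI_open hf ht
  have hGt : ContDiff ℝ 1 (fun w : Fin (n+1) → ℝ => g (t, w)) := slice_contDiff hI_open hg ht
  have hUtk : ∀ k, ContDiff ℝ 1 (fun w : Fin (n+1) → ℝ => U (t, w) k) := fun k =>
    contDiff_pi.1 (slice_contDiff hI_open hU ht) k
  have hWtk : ∀ k, ContDiff ℝ 1 (fun w : Fin (n+1) → ℝ => W (t, w) k) := fun k =>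
    contDiff_pi.1 (slice_contDiff hI_open hW ht) k
  have heqL : (fun w : Fin (n+1) → ℝ => Real.log (f (t, w) / g (t, w)))
      = fun w => Real.log (f (t, w)) - Real.log (g (t, w)) :=
    funext fun w => Real.log_div (hfne _) (hgne _)
  have hLt : ContDiff ℝ 1 (fun w : Fin (n+1) → ℝ => Real.log (f (t, w) / g (t, w))) := by
    rw [heqL]
    exact (hFt.log fun w => hfne _).sub (hGt.log fun w => hgne _)
  -- the divergence-free correction field
  set Gk : Fin (n+1) → (Fin (n+1) → ℝ) → ℝ := fun k w =>
    f (t, w) * (W (t, w) k - (Real.log (f (t, w) / g (t, w)) + 1) * U (t, w) k) with hGkdef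
  have hGk : ∀ k, ContDiff ℝ 1 (Gk k) := fun k =>
    hFt.mul ((hWtk k).sub ((hLt.add contDiff_const).mul (hUtk k)))
  have hGkper : ∀ k (v : Fin (n+1) → ℝ) (m : Fin (n+1) → ℤ),
      Gk k (v + fun j => (m j : ℝ)) = Gk k v := by
    intro k v m
    simp only [hGkdef, hf_per, hg_per, hU_per, hW_per]
  have hdiv0 : ∫ v in unitCube (n+1), ∑ k, fderiv ℝ (Gk k) v (Pi.single k 1) = 0 :=
    div_int_zero n Gk hGk hGkper
  -- target integrand
  set T : (Fin (n+1) → ℝ) → ℝ := fun v => f (t, v) *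
      ∑ k : Fin (n+1), fderiv ℝ (fun w => Real.log (f (t, w) / g (t, w))) v (Pi.single k 1)
        * (U (t, v) k - W (t, v) k) with hTdef
  -- pointwise identity
  have hpt : ∀ v : Fin (n+1) → ℝ, φ' (t, v) = T v + ∑ k, fderiv ℝ (Gk k) v (Pi.single k 1) := by
    intro v
    -- derivatives in space at v
    have hft : HasFDerivAt (fun w : Fin (n+1) → ℝ => f (t, w))
        (fderiv ℝ (fun w : Fin (n+1) → ℝ => f (t, w)) v) v :=
      (hFt.differentiable one_ne_zero v).hasFDerivAt
    have hgt : HasFDerivAt (fun w : Fin (n+1) → ℝ => g (t, w))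
        (fderiv ℝ (fun w : Fin (n+1) → ℝ => g (t, w)) v) v :=
      (hGt.differentiable one_ne_zero v).hasFDerivAt
    have hut : ∀ k, HasFDerivAt (fun w : Fin (n+1) → ℝ => U (t, w) k)
        (fderiv ℝ (fun w : Fin (n+1) → ℝ => U (t, w) k) v) v := fun k =>
      ((hUtk k).differentiable one_ne_zero v).hasFDerivAt
    have hwt : ∀ k, HasFDerivAt (fun w : Fin (n+1) → ℝ => W (t, w) k)
        (fderiv ℝ (fun w : Fin (n+1) → ℝ => W (t, w) k) v) v := fun k =>
      ((hWtk k).differentiable one_ne_zero v).hasFDerivAt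
    set dft := fderiv ℝ (fun w : Fin (n+1) → ℝ => f (t, w)) v
    set dgt := fderiv ℝ (fun w : Fin (n+1) → ℝ => g (t, w)) v
    set dut := fun k => fderiv ℝ (fun w : Fin (n+1) → ℝ => U (t, w) k) v
    set dwt := fun k => fderiv ℝ (fun w : Fin (n+1) → ℝ => W (t, w) k) v
    -- derivative of log(f/g) in space
    have hlt : HasFDerivAt (fun w : Fin (n+1) → ℝ => Real.log (f (t, w) / g (t, w)))
        ((f (t, v))⁻¹ • dft - (g (t, v))⁻¹ • dgt) v := by
      rw [heqL]
      exact (hft.log (hfne _)).sub (hgt.log (hgne _))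
    -- derivative of φ in time
    have hdf : HasFDerivAt f (fderiv ℝ f (t, v)) (t, v) :=
      ((hf.contDiffAt ((hI_open.prod isOpen_univ).mem_nhds
        ⟨ht, trivial⟩)).differentiableAt one_ne_zero).hasFDerivAt
    have hdg : HasFDerivAt g (fderiv ℝ g (t, v)) (t, v) :=
      ((hg.contDiffAt ((hI_open.prod isOpen_univ).mem_nhds
        ⟨ht, trivial⟩)).differentiableAt one_ne_zero).hasFDerivAt
    have hφp : HasFDerivAt φ
        (f (t, v) • ((f (t, v))⁻¹ • fderiv ℝ f (t, v) - (g (t, v))⁻¹ • fderiv ℝ g (t, v))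
          + (Real.log (f (t, v)) - Real.log (g (t, v))) • fderiv ℝ f (t, v)) (t, v) := by
      rw [heqφ]
      exact hdf.mul ((hdf.log (hfne _)).sub (hdg.log (hgne _)))
    -- scalar abbreviations
    have eφ : φ' (t, v) = f (t, v) * ((f (t, v))⁻¹ * fderiv ℝ f (t, v) ((1:ℝ), (0 : Fin (n+1) → ℝ))
          - (g (t, v))⁻¹ * fderiv ℝ g (t, v) ((1:ℝ), (0 : Fin (n+1) → ℝ)))
        + (Real.log (f (t, v)) - Real.log (g (t, v)))
          * fderiv ℝ f (t, v) ((1:ℝ), (0 : Fin (n+1) → ℝ)) := by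
      rw [hφ'def]
      simp only [hφp.fderiv, ContinuousLinearMap.add_apply, ContinuousLinearMap.smul_apply,
        ContinuousLinearMap.sub_apply, smul_eq_mul]
    have ea : fderiv ℝ f (t, v) ((1:ℝ), (0 : Fin (n+1) → ℝ))
        = -∑ k, (U (t, v) k * dft (Pi.single k 1) + f (t, v) * dut k (Pi.single k 1)) := by
      rw [hf_pde t ht v]
      congr 1
      refine Finset.sum_congr rfl fun k _ => ?_
      rw [HasFDerivAt.fderiv (f := fun w => U (t, w) k * f (t, w)) ((hut k).mul hft)]
      simp [smul_eq_mul]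
      exact Or.inl rfl
    have eb : fderiv ℝ g (t, v) ((1:ℝ), (0 : Fin (n+1) → ℝ))
        = -∑ k, (W (t, v) k * dgt (Pi.single k 1) + g (t, v) * dwt k (Pi.single k 1)) := by
      rw [hg_pde t ht v]
      congr 1
      refine Finset.sum_congr rfl fun k _ => ?_
      rw [HasFDerivAt.fderiv (f := fun w => W (t, w) k * g (t, w)) ((hwt k).mul hgt)]
      simp [smul_eq_mul]
      exact Or.inl rfl
    have eT : ∀ k : Fin (n+1),
        fderiv ℝ (fun w => Real.log (f (t, w) / g (t, w))) v (Pi.single k 1)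
          = (f (t, v))⁻¹ * dft (Pi.single k 1) - (g (t, v))⁻¹ * dgt (Pi.single k 1) := by
      intro k
      rw [hlt.fderiv]
      simp [smul_eq_mul]
    have eG : ∀ k : Fin (n+1), fderiv ℝ (Gk k) v (Pi.single k 1)
        = f (t, v) * (dwt k (Pi.single k 1)
            - ((Real.log (f (t, v) / g (t, v)) + 1) * dut k (Pi.single k 1)
              + U (t, v) k * ((f (t, v))⁻¹ * dft (Pi.single k 1)
                - (g (t, v))⁻¹ * dgt (Pi.single k 1))))
          + (W (t, v) k - (Real.log (f (t, v) / g (t, v)) + 1) * U (t, v) k)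
            * dft (Pi.single k 1) := by
      intro k
      have h1 : HasFDerivAt (Gk k)
          (f (t, v) • ((dwt k) - ((Real.log (f (t, v) / g (t, v)) + 1) • (dut k)
              + U (t, v) k • ((f (t, v))⁻¹ • dft - (g (t, v))⁻¹ • dgt)))
            + (W (t, v) k - (Real.log (f (t, v) / g (t, v)) + 1) * U (t, v) k) • dft) v :=
        hft.mul ((hwt k).sub ((hlt.add_const 1).mul (hut k)))
      rw [h1.fderiv]
      simp [smul_eq_mul]
    rw [eφ, ea, eb, hTdef]
    simp only [eT, eG, Real.log_div (hfne (t, v)) (hgne (t, v))]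
    exact algebra_key (n+1) (f (t, v)) (g (t, v)) (Real.log (f (t, v)) - Real.log (g (t, v)))
      (hfne _) (hgne _) (fun k => U (t, v) k) (fun k => W (t, v) k)
      (fun k => dft (Pi.single k 1)) (fun k => dgt (Pi.single k 1))
      (fun k => dut k (Pi.single k 1)) (fun k => dwt k (Pi.single k 1))
  -- integrability of the pieces
  have hTcont : Continuous T := by
    rw [hTdef]
    refine hFt.continuous.mul (continuous_finset_sum _ fun k _ => Continuous.mul ?_ ?_)
    · exact (ContinuousLinearMap.apply ℝ ℝ (Pi.single k 1)).continuous.comp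
        (hLt.continuous_fderiv one_ne_zero)
    · exact (hUtk k).continuous.sub (hWtk k).continuous
  have hDcont : Continuous fun v => ∑ k, fderiv ℝ (Gk k) v (Pi.single k 1) :=
    continuous_finset_sum _ fun k _ =>
      (ContinuousLinearMap.apply ℝ ℝ (Pi.single k 1)).continuous.comp
        ((hGk k).continuous_fderiv one_ne_zero)
  have hTint : IntegrableOn T (unitCube (n+1)) :=
    (hTcont.continuousOn.integrableOn_compact isCompact_Icc).mono_set hQsub
  have hDint : IntegrableOn (fun v => ∑ k, fderiv ℝ (Gk k) v (Pi.single k 1)) (unitCube (n+1)) :=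
    (hDcont.continuousOn.integrableOn_compact isCompact_Icc).mono_set hQsub
  -- final value
  have hIntEq : ∫ v in unitCube (n+1), φ' (t, v) = ∫ v in unitCube (n+1), T v := by
    calc ∫ v in unitCube (n+1), φ' (t, v)
        = ∫ v in unitCube (n+1), (T v + ∑ k, fderiv ℝ (Gk k) v (Pi.single k 1)) :=
          integral_congr_ae (Filter.Eventually.of_forall fun v => hpt v)
      _ = (∫ v in unitCube (n+1), T v) + ∫ v in unitCube (n+1), ∑ k, fderiv ℝ (Gk k) v (Pi.single k 1) :=
          integral_add hTint hDint
      _ = ∫ v in unitCube (n+1), T v := by rw [hdiv0, add_zero]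
  have := main.2
  rw [hIntEq] at this
  exact this
end

section
/- Let d ≥ 2, γ ∈ ℝ, C_γ > 0, and define the Landau kernel A(z) := C_γ |z|^γ (|z|² I_d − z ⊗ z) for z ∈ ℝ^d, z ≠ 0. Let s : ℝ^d → ℝ^d be differentiable, and fix u, w ∈ ℝ^d with w ≠ u. Then the divergence at w of the vector field w' ↦ A(w' − u)(s(w') − s(u)) equals ∑_{i,j=1}^d A_{ij}(w − u) ∂s_j/∂w_i (w) − C_γ (d − 1) |w − u|^γ ⟨w − u, s(w) − s(u)⟩. -/
open Finset

private noncomputable def pj (d : ℕ) (k : Fin d) : (Fin d → ℝ) →L[ℝ] ℝ :=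
  ContinuousLinearMap.proj k

@[simp] private lemma pj_apply (d : ℕ) (k : Fin d) (x : Fin d → ℝ) : pj d k x = x k := rfl

/-- Pointwise divergence identity for the Landau kernel
`A(z) = C_γ |z|^γ (|z|² I_d - z ⊗ z)`: for a differentiable score `s` and
`w ≠ u`, the divergence at `w` of `w' ↦ A(w' - u)(s(w') - s(u))` equals
`∑ᵢⱼ Aᵢⱼ(w-u) ∂sⱼ/∂wᵢ(w) - C_γ (d-1) |w-u|^γ ⟨w-u, s(w) - s(u)⟩`. -/
theorem stmt11 (d : ℕ) (hd : 2 ≤ d) (γ Cγ : ℝ) (hCγ : 0 < Cγ)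
    (A : (Fin d → ℝ) → Matrix (Fin d) (Fin d) ℝ)
    (hA : ∀ z : Fin d → ℝ, z ≠ 0 → ∀ i j, A z i j
      = Cγ * Real.sqrt (∑ k, z k ^ 2) ^ γ *
        ((if i = j then ∑ k, z k ^ 2 else 0) - z i * z j))
    (s : (Fin d → ℝ) → Fin d → ℝ) (hs : Differentiable ℝ s)
    (u w : Fin d → ℝ) (hwu : w ≠ u) :
    ∑ i : Fin d, fderiv ℝ (fun w' => (A (w' - u)).mulVec (s w' - s u) i) w (Pi.single i 1)
      = (∑ i : Fin d, ∑ j : Fin d,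
          A (w - u) i j * fderiv ℝ (fun x => s x j) w (Pi.single i 1))
        - Cγ * ((d : ℝ) - 1) * Real.sqrt (∑ k, (w - u) k ^ 2) ^ γ *
            ∑ k, (w - u) k * (s w k - s u k) := by
  classical
  have hz0 : w - u ≠ 0 := sub_ne_zero.mpr hwu
  -- Q₀ and its positivity
  set Q₀ : ℝ := ∑ k, (w k - u k) ^ 2 with hQ0def
  have hQpos : 0 < Q₀ := by
    obtain ⟨k, hk⟩ := Function.ne_iff.mp hwu
    have hk' : w k - u k ≠ 0 := sub_ne_zero.mpr hk
    refine Finset.sum_pos' (fun i _ => sq_nonneg _) ⟨k, Finset.mem_univ k, by positivity⟩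
  set P₀ : ℝ := Q₀ ^ (γ / 2 : ℝ) with hP0def
  -- derivative of Q
  set L : (Fin d → ℝ) →L[ℝ] ℝ := ∑ k, (2 * (w k - u k)) • pj d k with hLdef
  have hQ : HasFDerivAt (fun x : Fin d → ℝ => ∑ k, (x k - u k) ^ 2) L w := by
    refine HasFDerivAt.fun_sum fun k _ => ?_
    have h1 : HasFDerivAt (fun x : Fin d → ℝ => x k - u k) (pj d k) w :=
      ((pj d k).hasFDerivAt).sub_const (u k)
    have h2 := h1.fun_mul h1
    have heq : (fun x : Fin d → ℝ => (x k - u k) ^ 2)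
        = fun x => (x k - u k) * (x k - u k) := by funext x; ring
    rw [heq]
    refine h2.congr_fderiv ?_
    ext v
    simp [two_mul, add_mul]
  -- derivative of P = Q^(γ/2)
  have hP : HasFDerivAt (fun x : Fin d → ℝ => (∑ k, (x k - u k) ^ 2) ^ (γ / 2 : ℝ))
      (((γ / 2) * Q₀ ^ (γ / 2 - 1)) • L) w := by
    have hg : HasDerivAt (fun t : ℝ => t ^ (γ / 2 : ℝ))
        ((γ / 2) * Q₀ ^ (γ / 2 - 1)) ((fun x : Fin d → ℝ => ∑ k, (x k - u k) ^ 2) w) := by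
      simpa [← hQ0def] using Real.hasDerivAt_rpow_const (x := Q₀) (p := γ / 2) (Or.inl hQpos.ne')
    simpa [Function.comp_def] using hg.comp_hasFDerivAt w hQ
  -- coordinate derivatives
  have hco : ∀ i : Fin d, HasFDerivAt (fun x : Fin d → ℝ => x i - u i) (pj d i) w :=
    fun i => ((pj d i).hasFDerivAt).sub_const (u i)
  -- derivative of G i j
  have hG : ∀ i j : Fin d, HasFDerivAt
      (fun x : Fin d → ℝ => (if i = j then (1:ℝ) else 0) * (∑ k, (x k - u k) ^ 2)
        - (x i - u i) * (x j - u j))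
      ((if i = j then (1:ℝ) else 0) • L
        - ((w i - u i) • pj d j + (w j - u j) • pj d i)) w :=
    fun i j => (hQ.const_mul _).sub ((hco i).mul (hco j))
  -- derivative of a i j
  have ha : ∀ i j : Fin d, HasFDerivAt
      (fun x : Fin d → ℝ => Cγ * ((∑ k, (x k - u k) ^ 2) ^ (γ / 2 : ℝ) *
        ((if i = j then (1:ℝ) else 0) * (∑ k, (x k - u k) ^ 2) - (x i - u i) * (x j - u j))))
      (Cγ • (P₀ • ((if i = j then (1:ℝ) else 0) • L
          - ((w i - u i) • pj d j + (w j - u j) • pj d i))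
        + ((if i = j then (1:ℝ) else 0) * Q₀ - (w i - u i) * (w j - u j))
            • (((γ / 2) * Q₀ ^ (γ / 2 - 1)) • L))) w :=
    fun i j => (hP.mul (hG i j)).const_mul Cγ
  -- derivative of b j
  have hb : ∀ j : Fin d, HasFDerivAt (fun x => s x j - s u j)
      (fderiv ℝ (fun x => s x j) w) w := by
    intro j
    have hdiff : DifferentiableAt ℝ (fun x => s x j) w :=
      ((ContinuousLinearMap.proj j : (Fin d → ℝ) →L[ℝ] ℝ).differentiable.comp hs) w
    exact hdiff.hasFDerivAt.sub_const (s u j)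
  -- total derivative per row i
  have hfull : ∀ i : Fin d, HasFDerivAt
      (fun x : Fin d → ℝ => ∑ j, (Cγ * ((∑ k, (x k - u k) ^ 2) ^ (γ / 2 : ℝ) *
        ((if i = j then (1:ℝ) else 0) * (∑ k, (x k - u k) ^ 2) - (x i - u i) * (x j - u j))))
          * (s x j - s u j))
      (∑ j, ((Cγ * (P₀ * ((if i = j then (1:ℝ) else 0) * Q₀ - (w i - u i) * (w j - u j))))
          • fderiv ℝ (fun x => s x j) w
        + (s w j - s u j) • (Cγ • (P₀ • ((if i = j then (1:ℝ) else 0) • L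
          - ((w i - u i) • pj d j + (w j - u j) • pj d i))
        + ((if i = j then (1:ℝ) else 0) * Q₀ - (w i - u i) * (w j - u j))
            • (((γ / 2) * Q₀ ^ (γ / 2 - 1)) • L))))) w := by
    intro i
    exact HasFDerivAt.fun_sum fun j _ => (ha i j).mul (hb j)
  -- rewrite the goal's fderiv via local agreement
  have hrepl : ∀ i : Fin d,
      fderiv ℝ (fun w' => (A (w' - u)).mulVec (s w' - s u) i) w
      = (∑ j, ((Cγ * (P₀ * ((if i = j then (1:ℝ) else 0) * Q₀ - (w i - u i) * (w j - u j))))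
          • fderiv ℝ (fun x => s x j) w
        + (s w j - s u j) • (Cγ • (P₀ • ((if i = j then (1:ℝ) else 0) • L
          - ((w i - u i) • pj d j + (w j - u j) • pj d i))
        + ((if i = j then (1:ℝ) else 0) * Q₀ - (w i - u i) * (w j - u j))
            • (((γ / 2) * Q₀ ^ (γ / 2 - 1)) • L))))) := by
    intro i
    have hev : (fun w' => (A (w' - u)).mulVec (s w' - s u) i) =ᶠ[nhds w]
        (fun x : Fin d → ℝ => ∑ j, (Cγ * ((∑ k, (x k - u k) ^ 2) ^ (γ / 2 : ℝ) *
          ((if i = j then (1:ℝ) else 0) * (∑ k, (x k - u k) ^ 2) - (x i - u i) * (x j - u j))))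
            * (s x j - s u j)) := by
      have hne : ∀ᶠ x in nhds w, x - u ≠ 0 :=
        ((continuous_id.sub continuous_const).continuousAt).eventually_ne hz0
      filter_upwards [hne] with x hx
      simp only [Matrix.mulVec, dotProduct, hA _ hx, Pi.sub_apply]
      refine Finset.sum_congr rfl fun j _ => ?_
      have hQnn : (0:ℝ) ≤ ∑ k, (x k - u k) ^ 2 := Finset.sum_nonneg fun k _ => sq_nonneg _
      have hsq : Real.sqrt (∑ k, (x k - u k) ^ 2) ^ γ
          = (∑ k, (x k - u k) ^ 2) ^ (γ / 2 : ℝ) := by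
        rw [Real.sqrt_eq_rpow, ← Real.rpow_mul hQnn]
        congr 1; ring
      rw [hsq]
      by_cases h : i = j <;> simp [h, mul_assoc]
    rw [hev.fderiv_eq, (hfull i).fderiv]
  simp only [hrepl]
  -- rewrite RHS pieces
  have hsq0 : Real.sqrt (∑ k, (w k - u k) ^ 2) ^ γ = P₀ := by
    have hQnn : (0:ℝ) ≤ Q₀ := hQpos.le
    rw [hP0def, hQ0def]
    rw [Real.sqrt_eq_rpow, ← Real.rpow_mul (Finset.sum_nonneg fun k _ => sq_nonneg _)]
    congr 1; ring
  have hAval : ∀ i j : Fin d, A (w - u) i j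
      = Cγ * (P₀ * ((if i = j then (1:ℝ) else 0) * Q₀ - (w i - u i) * (w j - u j))) := by
    intro i j
    rw [hA _ hz0 i j]
    simp only [Pi.sub_apply, ← hQ0def]
    rw [show Real.sqrt Q₀ ^ γ = P₀ by
      rw [hP0def, Real.sqrt_eq_rpow, ← Real.rpow_mul hQpos.le]; congr 1; ring]
    by_cases h : i = j <;> simp [h, mul_assoc]
  simp only [Pi.sub_apply, hsq0, hAval]
  -- expand the applications of the derivative CLMs
  have happ : ∀ i : Fin d,
      (∑ j, ((Cγ * (P₀ * ((if i = j then (1:ℝ) else 0) * Q₀ - (w i - u i) * (w j - u j))))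
          • fderiv ℝ (fun x => s x j) w
        + (s w j - s u j) • (Cγ • (P₀ • ((if i = j then (1:ℝ) else 0) • L
          - ((w i - u i) • pj d j + (w j - u j) • pj d i))
        + ((if i = j then (1:ℝ) else 0) * Q₀ - (w i - u i) * (w j - u j))
            • (((γ / 2) * Q₀ ^ (γ / 2 - 1)) • L))))
        : (Fin d → ℝ) →L[ℝ] ℝ)
        (Pi.single i (1:ℝ))
      = ∑ j, ((Cγ * (P₀ * ((if i = j then (1:ℝ) else 0) * Q₀ - (w i - u i) * (w j - u j))))
          * fderiv ℝ (fun x => s x j) w (Pi.single i 1)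
        + (s w j - s u j) * (Cγ * (P₀ * ((if i = j then (1:ℝ) else 0) * (2 * (w i - u i))
          - ((w i - u i) * (if j = i then (1:ℝ) else 0) + (w j - u j)))
        + ((if i = j then (1:ℝ) else 0) * Q₀ - (w i - u i) * (w j - u j))
            * ((γ / 2) * Q₀ ^ (γ / 2 - 1) * (2 * (w i - u i)))))) := by
    intro i
    rw [ContinuousLinearMap.sum_apply]
    refine Finset.sum_congr rfl fun j _ => ?_
    have hLapp : L (Pi.single i (1:ℝ)) = 2 * (w i - u i) := by
      rw [hLdef, ContinuousLinearMap.sum_apply]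
      simp [Pi.single_apply, mul_ite]
    simp only [ContinuousLinearMap.add_apply, ContinuousLinearMap.smul_apply,
      ContinuousLinearMap.sub_apply, pj_apply, smul_eq_mul, hLapp, Pi.single_apply]
    rcases eq_or_ne i j with h | h
    · subst h
      simp only [if_pos rfl, eq_self_iff_true, if_true]
      ring
    · simp only [if_neg h, if_neg (Ne.symm h), eq_self_iff_true, if_true]
      ring
  simp only [happ]
  rw [show (∑ i : Fin d, ∑ j : Fin d, ((Cγ * (P₀ * ((if i = j then (1:ℝ) else 0) * Q₀ - (w i - u i) * (w j - u j))))
          * fderiv ℝ (fun x => s x j) w (Pi.single i 1)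
        + (s w j - s u j) * (Cγ * (P₀ * ((if i = j then (1:ℝ) else 0) * (2 * (w i - u i))
          - ((w i - u i) * (if j = i then (1:ℝ) else 0) + (w j - u j)))
        + ((if i = j then (1:ℝ) else 0) * Q₀ - (w i - u i) * (w j - u j))
            * ((γ / 2) * Q₀ ^ (γ / 2 - 1) * (2 * (w i - u i)))))))
      = (∑ i : Fin d, ∑ j : Fin d, (Cγ * (P₀ * ((if i = j then (1:ℝ) else 0) * Q₀ - (w i - u i) * (w j - u j))))
          * fderiv ℝ (fun x => s x j) w (Pi.single i 1))
        + (∑ i : Fin d, ∑ j : Fin d, (s w j - s u j) * (Cγ * (P₀ * ((if i = j then (1:ℝ) else 0) * (2 * (w i - u i))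
          - ((w i - u i) * (if j = i then (1:ℝ) else 0) + (w j - u j)))
        + ((if i = j then (1:ℝ) else 0) * Q₀ - (w i - u i) * (w j - u j))
            * ((γ / 2) * Q₀ ^ (γ / 2 - 1) * (2 * (w i - u i)))))) by
    rw [← Finset.sum_add_distrib]
    exact Finset.sum_congr rfl fun i _ => Finset.sum_add_distrib]
  have hY : (∑ i : Fin d, ∑ j : Fin d, (s w j - s u j) * (Cγ * (P₀ * ((if i = j then (1:ℝ) else 0) * (2 * (w i - u i))
          - ((w i - u i) * (if j = i then (1:ℝ) else 0) + (w j - u j)))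
        + ((if i = j then (1:ℝ) else 0) * Q₀ - (w i - u i) * (w j - u j))
            * ((γ / 2) * Q₀ ^ (γ / 2 - 1) * (2 * (w i - u i))))))
      = -(Cγ * ((d:ℝ) - 1) * P₀ * ∑ k, (w k - u k) * (s w k - s u k)) := by
    rw [Finset.sum_comm]
    have hrow : ∀ j : Fin d, (∑ i : Fin d, (s w j - s u j) * (Cγ * (P₀ * ((if i = j then (1:ℝ) else 0) * (2 * (w i - u i))
          - ((w i - u i) * (if j = i then (1:ℝ) else 0) + (w j - u j)))
        + ((if i = j then (1:ℝ) else 0) * Q₀ - (w i - u i) * (w j - u j))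
            * ((γ / 2) * Q₀ ^ (γ / 2 - 1) * (2 * (w i - u i))))))
        = -(Cγ * ((d:ℝ) - 1) * P₀ * ((w j - u j) * (s w j - s u j))) := by
      intro j
      have hterm : ∀ i : Fin d, (s w j - s u j) * (Cγ * (P₀ * ((if i = j then (1:ℝ) else 0) * (2 * (w i - u i))
          - ((w i - u i) * (if j = i then (1:ℝ) else 0) + (w j - u j)))
        + ((if i = j then (1:ℝ) else 0) * Q₀ - (w i - u i) * (w j - u j))
            * ((γ / 2) * Q₀ ^ (γ / 2 - 1) * (2 * (w i - u i)))))
          = (if i = j then (s w j - s u j) * Cγ * (P₀ + γ * Q₀ ^ (γ / 2 - 1) * Q₀) * (w i - u i)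
              else 0)
            + ((-((s w j - s u j) * Cγ * γ * Q₀ ^ (γ / 2 - 1) * (w j - u j))) * (w i - u i) ^ 2
               + (-((s w j - s u j) * Cγ * P₀ * (w j - u j)))) := by
        intro i
        rcases eq_or_ne i j with h | h
        · subst h
          simp only [if_pos rfl, eq_self_iff_true, if_true]
          ring
        · simp only [if_neg h, if_neg (Ne.symm h)]
          ring
      rw [Finset.sum_congr rfl fun i _ => hterm i, Finset.sum_add_distrib,
        Finset.sum_ite_eq' Finset.univ j
          (fun i => (s w j - s u j) * Cγ * (P₀ + γ * Q₀ ^ (γ / 2 - 1) * Q₀) * (w i - u i)),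
        Finset.sum_add_distrib, ← Finset.mul_sum, Finset.sum_const, Finset.card_univ,
        Fintype.card_fin, nsmul_eq_mul]
      simp only [Finset.mem_univ, if_true, ← hQ0def]
      ring
    rw [Finset.sum_congr rfl fun j _ => hrow j]
    rw [Finset.mul_sum, ← Finset.sum_neg_distrib]
  rw [hY]
  ring
end
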